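/- Let G be a topological group with countable pseudocharacter (the identity is a Gδ point) that contains a topological copy of the Fréchet–Urysohn fan S_ω. Then G contains a closed topological copy of S_ω. -/

import Mathlib

open Set Topology Filter

/-- A usual Cantor scheme, given by the endpoint functions of the intervals
`J_s = [a s, b s]`, indexed by finite binary sequences (lists of booleans),
where `s ++ [false]` is `s⌢0` and `s ++ [true]` is `s⌢1`. -/
structure CantorScheme where
  a : List Bool → ℝ
  b : List Bool → ℝ
  left_min : ∀ s, a (s ++ [false]) = a s
  right_max : ∀ s, b (s ++ [true]) = b s
  lt1 : ∀ s, a (s ++ [false]) < b (s ++ [false])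
  lt2 : ∀ s, b (s ++ [false]) < a (s ++ [true])
  lt3 : ∀ s, a (s ++ [true]) < b (s ++ [true])
  diam_tendsto : ∀ f : ℕ → Bool,
    Filter.Tendsto (fun n => b (List.ofFn fun i : Fin n => f i) - a (List.ofFn fun i : Fin n => f i))
      Filter.atTop (nhds 0)

/-- For `ξ ∈ (0,1]`, the unique `k` with `3^{-(k+1)} < ξ ≤ 3^{-k}`. -/
noncomputable def scaleIndex (ξ : ℝ) : ℕ := ⌊-Real.logb 3 ξ⌋₊

/-- The piecewise linear map `left_s : [0,1] → J_s` with `left_s 0 = min J_s`,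
`left_s (1/3^k) = max J_{s⌢0^{k+1}}`, linear on each `[1/3^{k+1}, 1/3^k]`. -/
noncomputable def CantorScheme.leftMap (C : CantorScheme) (s : List Bool) (ξ : ℝ) : ℝ :=
  if ξ ≤ 0 then C.a s
  else
    let k := scaleIndex ξ
    let x0 : ℝ := (3:ℝ)⁻¹ ^ (k + 1)
    let x1 : ℝ := (3:ℝ)⁻¹ ^ k
    let y0 := C.b (s ++ List.replicate (k + 2) false)
    let y1 := C.b (s ++ List.replicate (k + 1) false)
    y0 + (ξ - x0) / (x1 - x0) * (y1 - y0)

/-- The piecewise linear map `right_s : [0,1] → J_s` with `right_s 0 = max J_s`,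
`right_s (1/3^k) = min J_{s⌢1^{k+1}}`, linear on each `[1/3^{k+1}, 1/3^k]`. -/
noncomputable def CantorScheme.rightMap (C : CantorScheme) (s : List Bool) (ξ : ℝ) : ℝ :=
  if ξ ≤ 0 then C.b s
  else
    let k := scaleIndex ξ
    let x0 : ℝ := (3:ℝ)⁻¹ ^ (k + 1)
    let x1 : ℝ := (3:ℝ)⁻¹ ^ k
    let y0 := C.a (s ++ List.replicate (k + 2) true)
    let y1 := C.a (s ++ List.replicate (k + 1) true)
    y0 + (ξ - x0) / (x1 - x0) * (y1 - y0)

/-- The set `∂ℐ_{n,ξ}` of endpoints of the intervals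
`left_s([0,ξ]) = [min J_s, left_s ξ]` and `right_s([0,ξ]) = [right_s ξ, max J_s]`,
for `s` ranging over binary sequences of length `n`. -/
noncomputable def CantorScheme.boundary (C : CantorScheme) (n : ℕ) (ξ : ℝ) : Finset ℝ :=
  Finset.image
    (fun p : (Fin n → Bool) × Fin 4 =>
      ![C.a (List.ofFn p.1), C.leftMap (List.ofFn p.1) ξ,
        C.rightMap (List.ofFn p.1) ξ, C.b (List.ofFn p.1)] p.2)
    Finset.univ

/-- Alternating product `j x₁^{±1} j x₂^{∓1} ⋯` along a list, starting with the sign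
given by the boolean (`false` = inverse first). -/
def altProd {G : Type*} [Group G] (j : ℝ → G) : Bool → List ℝ → G
  | _, [] => 1
  | sgn, x :: l => (if sgn then j x else (j x)⁻¹) * altProd j (!sgn) l

/-- `π₋(X) = j x₁⁻¹ · j x₂ · j x₃⁻¹ ⋯` where `x₁ < x₂ < ⋯` enumerates the finite set `X`. -/
noncomputable def piMinus {G : Type*} [Group G] (j : ℝ → G) (X : Finset ℝ) : G :=
  altProd j false (X.sort (· ≤ ·))

/-- The map `z_n : [0,1] → G`, `z_n 0 = e`, `z_n ξ = π₋(∂ℐ_{n,ξ})` for `ξ > 0`. -/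
noncomputable def CantorScheme.z {G : Type*} [Group G] (C : CantorScheme) (j : ℝ → G)
    (n : ℕ) (ξ : ℝ) : G :=
  if ξ ≤ 0 then 1 else piMinus j (C.boundary n ξ)

/-- `j` is a functorial embedding of `[0,1]` into the topological group `G`:
a topological embedding of `[0,1]` such that every autohomeomorphism `h` of `[0,1]`
extends to a continuous group homomorphism `H : G → G` with `H ∘ j = j ∘ h`. -/
def FunctorialEmbedding {G : Type*} [Group G] [TopologicalSpace G] (j : ℝ → G) : Prop :=
  Topology.IsEmbedding ((Set.Icc (0:ℝ) 1).restrict j) ∧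
  ∀ h : Set.Icc (0:ℝ) 1 ≃ₜ Set.Icc (0:ℝ) 1,
    ∃ H : G →* G, Continuous H ∧ ∀ x : Set.Icc (0:ℝ) 1, H (j x) = j (h x)

/-- The convergent sequence `S₀ = {0} ∪ {1/(n+1) : n ∈ ℕ} ⊆ ℝ`. -/
def S0 : Set ℝ := {0} ∪ {x | ∃ n : ℕ, x = 1 / (n + 1)}

/-- The equivalence relation on `S₀ × ℕ` collapsing `{0} × ℕ` to a point. -/
def fanSetoid : Setoid (S0 × ℕ) where
  r p q := p = q ∨ (p.1.1 = 0 ∧ q.1.1 = 0)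
  iseqv := by
    refine ⟨fun p => Or.inl rfl, ?_, ?_⟩
    · rintro p q (rfl | ⟨hp, hq⟩)
      · exact Or.inl rfl
      · exact Or.inr ⟨hq, hp⟩
    · rintro p q r (rfl | ⟨hp, hq⟩) (rfl | ⟨hq', hr⟩)
      · exact Or.inl rfl
      · exact Or.inr ⟨hq', hr⟩
      · exact Or.inr ⟨hp, hq⟩
      · exact Or.inr ⟨hp, hr⟩

/-- The Fréchet–Urysohn fan `S_ω = (S₀ × ℕ) / ({0} × ℕ)` with the quotient topology. -/
def FrechetUrysohnFan : Type := Quotient fanSetoid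

instance : TopologicalSpace FrechetUrysohnFan :=
  inferInstanceAs (TopologicalSpace (Quotient fanSetoid))

namespace Fan17

open Set Topology Filter

/-! ### Points of `S0` -/

noncomputable def z0 : S0 := ⟨0, Or.inl rfl⟩

noncomputable def pt (m : ℕ) : S0 := ⟨1 / (m + 1), Or.inr ⟨m, rfl⟩⟩

lemma pt_val (m : ℕ) : ((pt m : S0) : ℝ) = 1 / ((m : ℝ) + 1) := rfl

lemma pt_val_pos (m : ℕ) : (0 : ℝ) < (pt m : ℝ) := by
  rw [pt_val]; positivity

lemma pt_ne_zero (m : ℕ) : ((pt m : S0) : ℝ) ≠ 0 := (pt_val_pos m).ne'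

lemma z0_val : ((z0 : S0) : ℝ) = 0 := rfl

lemma pt_inj {m m' : ℕ} (h : pt m = pt m') : m = m' := by
  have h' : (1 : ℝ) / ((m : ℝ) + 1) = 1 / ((m' : ℝ) + 1) := congrArg Subtype.val h
  field_simp at h'
  exact_mod_cast (by linarith : (m : ℝ) = m')

lemma S0_cases (x : S0) : x = z0 ∨ ∃ m, x = pt m := by
  obtain ⟨v, hv⟩ := x
  rcases hv with hv | ⟨m, rfl⟩
  · left; exact Subtype.ext hv
  · right; exact ⟨m, rfl⟩

/-! ### Open sets in `S0` -/

lemma val_lt_iff {k K : ℕ} : ((pt k : S0) : ℝ) < (((K : ℝ) + 2⁻¹)⁻¹) ↔ K ≤ k := by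
  rw [pt_val, one_div]
  rw [inv_lt_inv₀ (by positivity) (by positivity)]
  constructor
  · intro h
    have : (K : ℝ) < (k : ℝ) + 1 := lt_of_le_of_lt (by linarith) h
    exact_mod_cast Nat.lt_add_one_iff.mp (by exact_mod_cast this)
  · intro h
    have : (K : ℝ) ≤ (k : ℝ) := by exact_mod_cast h
    linarith

lemma isOpen_singleton_pt (m : ℕ) : IsOpen ({pt m} : Set S0) := by
  have key : ({pt m} : Set S0) =
      (Subtype.val) ⁻¹' (Ioo (((m : ℝ) + 1 + 2⁻¹)⁻¹) (((m : ℝ) + 2⁻¹)⁻¹)) := by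
    ext x
    simp only [mem_singleton_iff, mem_preimage, mem_Ioo]
    constructor
    · rintro rfl
      rw [pt_val, one_div]
      constructor
      · rw [inv_lt_inv₀ (by positivity) (by positivity)]; linarith
      · rw [inv_lt_inv₀ (by positivity) (by positivity)]; linarith
    · rintro ⟨h1, h2⟩
      rcases S0_cases x with rfl | ⟨k, rfl⟩
      · rw [z0_val] at h1
        exact absurd h1 (not_lt.2 (by positivity))
      · rw [pt_val, one_div] at h1 h2
        rw [inv_lt_inv₀ (by positivity) (by positivity)] at h1 h2
        have hk1 : k ≤ m := by
          have : (k : ℝ) + 1 < (m : ℝ) + 2 := by linarith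
          have : (k : ℕ) + 1 < m + 2 := by exact_mod_cast this
          omega
        have hk2 : m ≤ k := by
          have : (m : ℝ) < (k : ℝ) + 1 := by linarith
          have : m < k + 1 := by exact_mod_cast this
          omega
        have : k = m := le_antisymm hk1 hk2
        subst this; rfl
  rw [key]
  exact (isOpen_Ioo).preimage continuous_subtype_val

lemma isOpen_tail (K : ℕ) :
    IsOpen {x : S0 | x = z0 ∨ ∃ m, K ≤ m ∧ x = pt m} := by
  have key : {x : S0 | x = z0 ∨ ∃ m, K ≤ m ∧ x = pt m} =
      (Subtype.val) ⁻¹' (Iio (((K : ℝ) + 2⁻¹)⁻¹)) := by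
    ext x
    simp only [mem_setOf_eq, mem_preimage, mem_Iio]
    constructor
    · rintro (rfl | ⟨m, hm, rfl⟩)
      · rw [z0_val]; positivity
      · exact val_lt_iff.2 hm
    · intro h
      rcases S0_cases x with rfl | ⟨k, rfl⟩
      · exact Or.inl rfl
      · exact Or.inr ⟨k, val_lt_iff.1 h, rfl⟩
  rw [key]
  exact (isOpen_Iio).preimage continuous_subtype_val

lemma tendsto_pt : Tendsto pt atTop (𝓝 z0) := by
  rw [tendsto_subtype_rng]
  exact tendsto_one_div_add_atTop_nhds_zero_nat

lemma isOpen_S0_iff {s : Set S0} :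
    IsOpen s ↔ (z0 ∈ s → ∃ K, ∀ m, K ≤ m → pt m ∈ s) := by
  constructor
  · intro hs hz
    have h := tendsto_pt.eventually_mem (hs.mem_nhds hz)
    obtain ⟨K, hK⟩ := eventually_atTop.1 h
    exact ⟨K, hK⟩
  · intro h
    by_cases hz : z0 ∈ s
    · obtain ⟨K, hK⟩ := h hz
      have key : s = {x : S0 | x = z0 ∨ ∃ m, K ≤ m ∧ x = pt m} ∪
          ⋃ (m : ℕ) (_ : pt m ∈ s), {pt m} := by
        apply Subset.antisymm
        · intro x hx
          rcases S0_cases x with rfl | ⟨m, rfl⟩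
          · exact Or.inl (Or.inl rfl)
          · exact Or.inr (mem_iUnion₂.2 ⟨m, hx, rfl⟩)
        · rintro x (hx | hx)
          · rcases hx with rfl | ⟨m, hm, rfl⟩
            · exact hz
            · exact hK m hm
          · obtain ⟨m, hm, hx⟩ := mem_iUnion₂.1 hx
            rw [mem_singleton_iff] at hx; subst hx; exact hm
      rw [key]
      exact (isOpen_tail K).union (isOpen_iUnion fun m => isOpen_iUnion fun _ =>
        isOpen_singleton_pt m)
    · have key : s = ⋃ (m : ℕ) (_ : pt m ∈ s), {pt m} := by
        apply Subset.antisymm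
        · intro x hx
          rcases S0_cases x with rfl | ⟨m, rfl⟩
          · exact absurd hx hz
          · exact mem_iUnion₂.2 ⟨m, hx, rfl⟩
        · intro x hx
          obtain ⟨m, hm, hx⟩ := mem_iUnion₂.1 hx
          rw [mem_singleton_iff] at hx; subst hx; exact hm
      rw [key]
      exact isOpen_iUnion fun m => isOpen_iUnion fun _ => isOpen_singleton_pt m

/-! ### The fan -/

noncomputable def fanC : FrechetUrysohnFan := Quotient.mk fanSetoid (z0, 0)

noncomputable def fanP (n m : ℕ) : FrechetUrysohnFan := Quotient.mk fanSetoid (pt m, n)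

lemma fan_rel {p q : S0 × ℕ} (h : Quotient.mk fanSetoid p = Quotient.mk fanSetoid q) :
    p = q ∨ ((p.1 : ℝ) = 0 ∧ (q.1 : ℝ) = 0) := Quotient.exact h

lemma mk_z0 (n : ℕ) : Quotient.mk fanSetoid (z0, n) = fanC :=
  Quot.sound (Or.inr ⟨rfl, rfl⟩)

lemma fan_cases (x : FrechetUrysohnFan) : x = fanC ∨ ∃ n m, x = fanP n m := by
  obtain ⟨⟨y, n⟩⟩ := x
  rcases S0_cases y with rfl | ⟨m, rfl⟩
  · exact Or.inl (mk_z0 n)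
  · exact Or.inr ⟨n, m, rfl⟩

lemma fanP_ne_fanC (n m : ℕ) : fanP n m ≠ fanC := by
  intro h
  rcases fan_rel h with h | ⟨h1, _⟩
  · exact pt_ne_zero m (by rw [show pt m = z0 from congrArg Prod.fst h]; rfl)
  · exact pt_ne_zero m h1

lemma fanP_inj {n m n' m' : ℕ} (h : fanP n m = fanP n' m') : n = n' ∧ m = m' := by
  rcases fan_rel h with h | ⟨h1, _⟩
  · have h2 : pt m = pt m' := congrArg Prod.fst h
    exact ⟨congrArg Prod.snd h, pt_inj h2⟩
  · exact absurd h1 (pt_ne_zero m)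

lemma isOpen_fan_iff {U : Set FrechetUrysohnFan} :
    IsOpen U ↔ (fanC ∈ U → ∀ n, ∃ K, ∀ m, K ≤ m → fanP n m ∈ U) := by
  letI : Setoid (S0 × ℕ) := fanSetoid
  have hq : IsOpen U ↔
      IsOpen ((Quotient.mk' : S0 × ℕ → Quotient fanSetoid) ⁻¹' U) :=
    (isQuotientMap_quotient_mk'.isOpen_preimage).symm
  rw [hq]
  have hslice : IsOpen ((Quotient.mk' : S0 × ℕ → Quotient fanSetoid) ⁻¹' U) ↔
      ∀ n, IsOpen {x : S0 | Quotient.mk fanSetoid (x, n) ∈ U} := by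
    constructor
    · intro h n
      exact h.preimage (Continuous.prodMk continuous_id continuous_const)
    · intro h
      have key : ((Quotient.mk' : S0 × ℕ → Quotient fanSetoid) ⁻¹' U) =
          ⋃ n, {x : S0 | Quotient.mk fanSetoid (x, n) ∈ U} ×ˢ ({n} : Set ℕ) := by
        ext ⟨x, n⟩
        simp only [mem_preimage, mem_iUnion, mem_prod, mem_setOf_eq, mem_singleton_iff]
        constructor
        · intro h'; exact ⟨n, h', rfl⟩
        · rintro ⟨k, hk, rfl⟩; exact hk
      rw [key]
      exact isOpen_iUnion fun n => (h n).prod (isOpen_discrete _)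
  rw [hslice]
  constructor
  · intro h hc n
    obtain ⟨K, hK⟩ := isOpen_S0_iff.1 (h n) (by rwa [mem_setOf_eq, mk_z0])
    exact ⟨K, hK⟩
  · intro h n
    rw [isOpen_S0_iff]
    intro hz
    rw [mem_setOf_eq, mk_z0] at hz
    exact h hz n

lemma tendsto_fanP (n : ℕ) : Tendsto (fanP n) atTop (𝓝 fanC) := by
  rw [tendsto_atTop_nhds]
  intro U hCU hU
  obtain ⟨K, hK⟩ := isOpen_fan_iff.1 hU hCU n
  exact ⟨K, hK⟩

/-! ### The shift map -/

open Classical in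
noncomputable def shiftAux (M : ℕ → ℕ) (p : S0 × ℕ) : FrechetUrysohnFan :=
  if ((p.1 : ℝ) = 0) then fanC else fanP p.2 (⌊((p.1 : ℝ))⁻¹⌋₊ - 1 + M p.2)

lemma shiftAux_respects (M : ℕ → ℕ) :
    ∀ p q : S0 × ℕ, fanSetoid.r p q → shiftAux M p = shiftAux M q := by
  rintro p q (rfl | ⟨h1, h2⟩)
  · rfl
  · simp only [shiftAux, h1, h2, if_pos]

noncomputable def shift (M : ℕ → ℕ) : FrechetUrysohnFan → FrechetUrysohnFan :=
  Quotient.lift (shiftAux M) (shiftAux_respects M)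

lemma shift_fanC (M : ℕ → ℕ) : shift M fanC = fanC := by
  show shiftAux M (z0, 0) = fanC
  simp [shiftAux, z0_val]

lemma shift_fanP (M : ℕ → ℕ) (n m : ℕ) : shift M (fanP n m) = fanP n (m + M n) := by
  show shiftAux M (pt m, n) = fanP n (m + M n)
  have hval : ((pt m : S0) : ℝ)⁻¹ = ((m + 1 : ℕ) : ℝ) := by
    rw [pt_val, one_div, inv_inv]; push_cast; ring
  simp only [shiftAux, pt_ne_zero m, hval, Nat.floor_natCast, Nat.add_sub_cancel]
  exact if_neg not_false

lemma shift_injective (M : ℕ → ℕ) : Function.Injective (shift M) := by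
  intro x y h
  rcases fan_cases x with rfl | ⟨n, m, rfl⟩ <;> rcases fan_cases y with rfl | ⟨n', m', rfl⟩
  · rfl
  · rw [shift_fanC, shift_fanP] at h
    exact absurd h.symm (fanP_ne_fanC _ _)
  · rw [shift_fanC, shift_fanP] at h
    exact absurd h (fanP_ne_fanC _ _)
  · rw [shift_fanP, shift_fanP] at h
    obtain ⟨hn, hm⟩ := fanP_inj h
    subst hn
    have : m = m' := by omega
    rw [this]

lemma shift_continuous (M : ℕ → ℕ) : Continuous (shift M) := by
  rw [continuous_def]
  intro U hU
  rw [isOpen_fan_iff]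
  intro hc n
  rw [mem_preimage, shift_fanC] at hc
  obtain ⟨K, hK⟩ := isOpen_fan_iff.1 hU hc n
  refine ⟨K, fun m hm => ?_⟩
  rw [mem_preimage, shift_fanP]
  exact hK _ (le_trans hm (Nat.le_add_right _ _))

lemma shift_isEmbedding (M : ℕ → ℕ) : Topology.IsEmbedding (shift M) := by
  refine ⟨⟨le_antisymm (continuous_iff_le_induced.1 (shift_continuous M)) ?_⟩,
    shift_injective M⟩
  rw [TopologicalSpace.le_def]
  intro U hU
  rw [isOpen_induced_iff]
  refine ⟨shift M '' U ∪ {x | ∃ n m, m < M n ∧ x = fanP n m}, ?_, ?_⟩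
  · rw [isOpen_fan_iff]
    rintro (hc | ⟨n, m, _, hc⟩) n
    · obtain ⟨y, hyU, hy⟩ := hc
      have hyC : y = fanC := by
        rcases fan_cases y with rfl | ⟨n', m', rfl⟩
        · rfl
        · rw [shift_fanP] at hy
          exact absurd hy (fanP_ne_fanC _ _)
      subst hyC
      obtain ⟨K, hK⟩ := isOpen_fan_iff.1 hU hyU n
      refine ⟨K + M n, fun m hm => ?_⟩
      left
      refine ⟨fanP n (m - M n), hK _ (by omega), ?_⟩
      rw [shift_fanP]
      congr 1
      omega
    · exact absurd hc.symm (fanP_ne_fanC _ _)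
  · ext x
    simp only [mem_preimage, mem_union, mem_image, mem_setOf_eq]
    constructor
    · rintro (⟨y, hyU, hy⟩ | ⟨n, m, hm, hx⟩)
      · rwa [← shift_injective M hy]
      · exfalso
        rcases fan_cases x with rfl | ⟨n', m', rfl⟩
        · rw [shift_fanC] at hx
          exact fanP_ne_fanC n m hx.symm
        · rw [shift_fanP] at hx
          obtain ⟨rfl, hm'⟩ := fanP_inj hx
          omega
    · intro hx
      exact Or.inl ⟨x, hx, rfl⟩

end Fan17

/-- A topological group of countable pseudocharacter which contains a topological copy of
the Fréchet–Urysohn fan `S_ω` contains a closed topological copy of `S_ω`. -/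
theorem stmt17 {G : Type*} [Group G] [TopologicalSpace G] [IsTopologicalGroup G]
    (hpsi : ∃ u : ℕ → Set G, (∀ n, IsOpen (u n)) ∧ (⋂ n, u n) = {(1 : G)})
    (hfan : ∃ f : FrechetUrysohnFan → G, Topology.IsEmbedding f) :
    ∃ f : FrechetUrysohnFan → G, Topology.IsEmbedding f ∧ IsClosed (Set.range f) := by
  classical
  obtain ⟨u, huo, hui⟩ := hpsi
  obtain ⟨f, hf⟩ := hfan
  have h1mem : ∀ n, (1 : G) ∈ u n := by
    intro n
    have h : (1 : G) ∈ ⋂ n, u n := by rw [hui]; exact rfl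
    exact Set.mem_iInter.1 h n
  -- the group is T2 since `{1}` is closed
  have hclosed1 : IsClosed ({1} : Set G) := by
    apply isClosed_of_closure_subset
    intro g hg
    have hgu : ∀ n, g ∈ u n := by
      intro n
      have hV : IsOpen ((fun x : G => g * x⁻¹) ⁻¹' u n) :=
        (huo n).preimage (continuous_const.mul continuous_inv)
      have hgV : g ∈ (fun x : G => g * x⁻¹) ⁻¹' u n := by
        simp [h1mem n]
      obtain ⟨x, hx1, hx2⟩ := mem_closure_iff.1 hg _ hV hgV
      rw [Set.mem_singleton_iff] at hx2
      subst hx2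
      simpa using hx1
    have : g ∈ ⋂ n, u n := Set.mem_iInter.2 hgu
    rwa [hui] at this
  haveI : T2Space G := IsTopologicalGroup.t2Space_iff_one_closed.2 hclosed1
  set x₀ := f Fan17.fanC with hx₀
  -- countable pseudocharacter at `x₀`
  set v : ℕ → Set G := fun n => (fun g => x₀⁻¹ * g) ⁻¹' (u n) with hv
  have hvo : ∀ n, IsOpen (v n) := fun n =>
    (huo n).preimage (continuous_const.mul continuous_id)
  have hvx : ∀ n, x₀ ∈ v n := by
    intro n
    show x₀⁻¹ * x₀ ∈ u n
    simpa using h1mem n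
  have hvi : ∀ g, (∀ n, g ∈ v n) → g = x₀ := by
    intro g hg
    have h : x₀⁻¹ * g ∈ ⋂ n, u n := Set.mem_iInter.2 hg
    rw [hui, Set.mem_singleton_iff] at h
    calc g = x₀ * (x₀⁻¹ * g) := by group
    _ = x₀ := by rw [h, mul_one]
  -- nested open neighbourhoods of `x₀` via regularity
  have key : ∀ n, ∃ Vn : Set G, IsOpen Vn ∧ x₀ ∈ Vn ∧ closure Vn ⊆ v n := by
    intro n
    obtain ⟨C, hCmem, hCc, hCsub⟩ :=
      exists_mem_nhds_isClosed_subset ((hvo n).mem_nhds (hvx n))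
    refine ⟨interior C, isOpen_interior, mem_interior_iff_mem_nhds.2 hCmem, ?_⟩
    refine (closure_mono interior_subset).trans ?_
    rw [hCc.closure_eq]
    exact hCsub
  choose W0 hW0o hW0x hW0c using key
  set W : ℕ → Set G := fun n => ⋂ k ∈ Finset.range (n + 1), W0 k with hW
  have hWo : ∀ n, IsOpen (W n) := fun n =>
    isOpen_biInter_finset fun k _ => hW0o k
  have hWx : ∀ n, x₀ ∈ W n := fun n => Set.mem_iInter₂.2 fun k _ => hW0x k
  have hWanti : ∀ a b : ℕ, a ≤ b → W b ⊆ W a := by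
    intro a b hab x hx
    refine Set.mem_iInter₂.2 fun k hk => Set.mem_iInter₂.1 hx k ?_
    simp only [Finset.mem_range] at hk ⊢
    omega
  have hWsub : ∀ n, W n ⊆ W0 n := fun n x hx =>
    Set.mem_iInter₂.1 hx n (by simp)
  have hWlim : ∀ g, (∀ n, g ∈ closure (W n)) → g = x₀ := by
    intro g hg
    exact hvi g fun n => hW0c n (closure_mono (hWsub n) (hg n))
  -- choose tails of each sequence inside `W n`
  have htend : ∀ n, Filter.Tendsto (fun m => f (Fan17.fanP n m)) Filter.atTop (𝓝 x₀) := by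
    intro n
    exact (hf.continuous.tendsto _).comp (Fan17.tendsto_fanP n)
  have hMex : ∀ n, ∃ Mn, ∀ m, Mn ≤ m → f (Fan17.fanP n m) ∈ W n := by
    intro n
    have h := (htend n).eventually_mem ((hWo n).mem_nhds (hWx n))
    exact Filter.eventually_atTop.1 h
  choose M hM using hMex
  refine ⟨f ∘ Fan17.shift M, hf.comp (Fan17.shift_isEmbedding M), ?_⟩
  have hx0mem : x₀ ∈ Set.range (f ∘ Fan17.shift M) :=
    ⟨Fan17.fanC, by simp [Fan17.shift_fanC, hx₀]⟩
  apply isClosed_of_closure_subset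
  intro y hy
  by_cases hyx : y = x₀
  · exact hyx ▸ hx0mem
  obtain ⟨N, hN⟩ : ∃ N, y ∉ closure (W N) := by
    by_contra h
    push_neg at h
    exact hyx (hWlim y h)
  set K : ℕ → Set G := fun n =>
    insert x₀ (Set.range fun m => f (Fan17.fanP n (m + M n))) with hK
  have hKc : ∀ n, IsClosed (K n) := by
    intro n
    have h : Filter.Tendsto (fun m => f (Fan17.fanP n (m + M n))) Filter.atTop (𝓝 x₀) :=
      (htend n).comp (Filter.tendsto_add_atTop_nat (M n))
    exact h.isCompact_insert_range.isClosed
  set BigK : Set G := ⋃ n ∈ Finset.range (N + 1), K n with hBigK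
  have hBigKc : IsClosed BigK :=
    Set.Finite.isClosed_biUnion (Finset.range (N + 1)).finite_toSet
      fun n _ => hKc n
  have hsub : Set.range (f ∘ Fan17.shift M) ⊆ W N ∪ BigK := by
    rintro _ ⟨x, rfl⟩
    rcases Fan17.fan_cases x with rfl | ⟨n, m, rfl⟩
    · right
      have he : (f ∘ Fan17.shift M) Fan17.fanC = x₀ := by simp [Fan17.shift_fanC, hx₀]
      rw [he]
      exact Set.mem_iUnion₂.2 ⟨0, by simp, Set.mem_insert _ _⟩
    · simp only [Function.comp_apply, Fan17.shift_fanP]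
      by_cases hn : n ≤ N
      · right
        exact Set.mem_iUnion₂.2 ⟨n, by simp; omega, Set.mem_insert_of_mem _ ⟨m, rfl⟩⟩
      · left
        exact hWanti N n (by omega) (hM n _ (Nat.le_add_left _ _))
  have hcl : closure (Set.range (f ∘ Fan17.shift M)) ⊆ closure (W N) ∪ BigK := by
    calc closure (Set.range (f ∘ Fan17.shift M)) ⊆ closure (W N ∪ BigK) :=
      closure_mono hsub
    _ ⊆ closure (W N) ∪ closure BigK := by rw [closure_union]
    _ = closure (W N) ∪ BigK := by rw [hBigKc.closure_eq]
  rcases hcl hy with h | h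
  · exact absurd h hN
  · obtain ⟨n, _, hyK⟩ := Set.mem_iUnion₂.1 h
    rcases hyK with rfl | ⟨m, rfl⟩
    · exact absurd rfl hyx
    · exact ⟨Fan17.fanP n m, by simp [Fan17.shift_fanP]⟩
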